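/- (Kolmogorov 0–1 law for capacities) Let μ be a continuous capacity on a measurable space (Ω,𝓕) and let {Y_n}_{n∈ℕ} be a sequence of real-valued random variables on Ω such that for every n ∈ ℕ the σ-algebras σ(Y_k : k ≤ n) and σ(Y_k : k ≥ n+1) are independent with respect to μ. Let 𝒯 = ⋂_{n=1}^∞ σ(Y_k : k ≥ n) be the tail σ-algebra. Then for every A ∈ 𝒯 both of the following hold: (i) μ(A) = 0 or μ(A) = 1; (ii) μ(A) = 0 or μ(Aᶜ) = 0. -/

import Mathlib

open MeasureTheory Filter Topology Set

def IsFinAddProb {Ω : Type*} [MeasurableSpace Ω] (P : Set Ω → ℝ) : Prop :=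
  P ∅ = 0 ∧ P Set.univ = 1 ∧
    (∀ A : Set Ω, MeasurableSet A → 0 ≤ P A ∧ P A ≤ 1) ∧
    (∀ A B : Set Ω, MeasurableSet A → MeasurableSet B → Disjoint A B →
      P (A ∪ B) = P A + P B)

def IsCapacity {Ω : Type*} [MeasurableSpace Ω] (μ : Set Ω → ℝ) : Prop :=
  μ ∅ = 0 ∧ μ Set.univ = 1 ∧
    ∀ A B : Set Ω, MeasurableSet A → MeasurableSet B → A ⊆ B → μ A ≤ μ B

def ContBelow {Ω : Type*} [MeasurableSpace Ω] (μ : Set Ω → ℝ) : Prop :=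
  ∀ A : ℕ → Set Ω, (∀ n, MeasurableSet (A n)) → Monotone A →
    Filter.Tendsto (fun n => μ (A n)) Filter.atTop (nhds (μ (⋃ n, A n)))

def ContAbove {Ω : Type*} [MeasurableSpace Ω] (μ : Set Ω → ℝ) : Prop :=
  ∀ A : ℕ → Set Ω, (∀ n, MeasurableSet (A n)) → Antitone A →
    Filter.Tendsto (fun n => μ (A n)) Filter.atTop (nhds (μ (⋂ n, A n)))

def ContAtEmpty {Ω : Type*} [MeasurableSpace Ω] (μ : Set Ω → ℝ) : Prop :=
  ∀ A : ℕ → Set Ω, (∀ n, MeasurableSet (A n)) → Antitone A → (⋂ n, A n) = ∅ →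
    Filter.Tendsto (fun n => μ (A n)) Filter.atTop (nhds 0)

def ContAtUniv {Ω : Type*} [MeasurableSpace Ω] (μ : Set Ω → ℝ) : Prop :=
  ∀ A : ℕ → Set Ω, (∀ n, MeasurableSet (A n)) → Monotone A → (⋃ n, A n) = Set.univ →
    Filter.Tendsto (fun n => μ (A n)) Filter.atTop (nhds 1)

def conjCap {Ω : Type*} (μ : Set Ω → ℝ) (A : Set Ω) : ℝ := 1 - μ Aᶜ

noncomputable def choquet {Ω : Type*} (μ : Set Ω → ℝ) (ξ : Ω → ℝ) : ℝ :=
  (∫ t in Set.Ioi (0:ℝ), μ {ω | ξ ω ≥ t}) +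
    (∫ t in Set.Iio (0:ℝ), (μ {ω | ξ ω ≥ t} - 1))

noncomputable def choquetE {Ω : Type*} (μ : Set Ω → ℝ) (ξ : Ω → EReal) : ℝ :=
  (∫ t in Set.Ioi (0:ℝ), μ {ω | (t : EReal) ≤ ξ ω}) +
    (∫ t in Set.Iio (0:ℝ), (μ {ω | (t : EReal) ≤ ξ ω} - 1))

def UpperProbOf {Ω : Type*} [MeasurableSpace Ω] (𝒮 : Set (Set Ω → ℝ)) (V : Set Ω → ℝ) : Prop :=
  ∀ A : Set Ω, MeasurableSet A → V A = sSup ((fun P => P A) '' 𝒮)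

def LowerProbOf {Ω : Type*} [MeasurableSpace Ω] (𝒮 : Set (Set Ω → ℝ)) (v : Set Ω → ℝ) : Prop :=
  ∀ A : Set Ω, MeasurableSet A → v A = sInf ((fun P => P A) '' 𝒮)

def ErgodicCap {Ω : Type*} [MeasurableSpace Ω] (μ : Set Ω → ℝ) (θ : Ω → Ω) : Prop :=
  ∀ B : Set Ω, MeasurableSet B → θ ⁻¹' B = B →
    (μ B = 0 ∨ μ B = 1) ∧ (μ B = 0 ∨ μ Bᶜ = 0)

def PreservesCap {Ω : Type*} [MeasurableSpace Ω] (μ : Set Ω → ℝ) (θ : Ω → Ω) : Prop :=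
  ∀ A : Set Ω, MeasurableSet A → μ (θ ⁻¹' A) = μ A

def IndepSigmaWrt {Ω : Type*} (μ : Set Ω → ℝ) (m₁ m₂ : MeasurableSpace Ω) : Prop :=
  ∀ A B : Set Ω, MeasurableSet[m₁] A → MeasurableSet[m₂] B → μ (A ∩ B) = μ A * μ B

section MonoClassAux

variable {α : Type*}

/-- The smallest monotone class containing `𝒜`. -/
inductive MonoClass (𝒜 : Set (Set α)) : Set α → Prop
  | basic {s : Set α} : s ∈ 𝒜 → MonoClass 𝒜 s
  | mUnion {f : ℕ → Set α} : Monotone f → (∀ n, MonoClass 𝒜 (f n)) → MonoClass 𝒜 (⋃ n, f n)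
  | mInter {f : ℕ → Set α} : Antitone f → (∀ n, MonoClass 𝒜 (f n)) → MonoClass 𝒜 (⋂ n, f n)

theorem MonoClass.compl {𝒜 : Set (Set α)} (hc : ∀ s ∈ 𝒜, sᶜ ∈ 𝒜) {s : Set α}
    (hs : MonoClass 𝒜 s) : MonoClass 𝒜 sᶜ := by
  induction hs with
  | basic h => exact .basic (hc _ h)
  | @mUnion f hf _ ih =>
      rw [Set.compl_iUnion]
      exact .mInter (fun a b hab => Set.compl_subset_compl.2 (hf hab)) ih
  | @mInter f hf _ ih =>
      rw [Set.compl_iInter]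
      exact .mUnion (fun a b hab => Set.compl_subset_compl.2 (hf hab)) ih

theorem MonoClass.union_basic {𝒜 : Set (Set α)}
    (hu : ∀ s ∈ 𝒜, ∀ t ∈ 𝒜, s ∪ t ∈ 𝒜) {s t : Set α} (ht : t ∈ 𝒜)
    (hs : MonoClass 𝒜 s) : MonoClass 𝒜 (s ∪ t) := by
  induction hs with
  | basic h => exact .basic (hu _ h _ ht)
  | @mUnion f hf _ ih =>
      rw [Set.iUnion_union]
      exact .mUnion (fun a b hab => Set.union_subset_union (hf hab) subset_rfl) ih
  | @mInter f hf _ ih =>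
      rw [Set.iInter_union]
      exact .mInter (fun a b hab => Set.union_subset_union (hf hab) subset_rfl) ih

theorem MonoClass.union {𝒜 : Set (Set α)}
    (hu : ∀ s ∈ 𝒜, ∀ t ∈ 𝒜, s ∪ t ∈ 𝒜) {s t : Set α}
    (hs : MonoClass 𝒜 s) (ht : MonoClass 𝒜 t) : MonoClass 𝒜 (s ∪ t) := by
  induction ht with
  | basic h => exact hs.union_basic hu h
  | @mUnion f hf _ ih =>
      rw [Set.union_iUnion]
      exact .mUnion (fun a b hab => Set.union_subset_union subset_rfl (hf hab)) ih
  | @mInter f hf _ ih =>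
      rw [Set.union_iInter]
      exact .mInter (fun a b hab => Set.union_subset_union subset_rfl (hf hab)) ih

theorem MonoClass.iUnion {𝒜 : Set (Set α)} (h0 : ∅ ∈ 𝒜)
    (hu : ∀ s ∈ 𝒜, ∀ t ∈ 𝒜, s ∪ t ∈ 𝒜) {f : ℕ → Set α}
    (hf : ∀ n, MonoClass 𝒜 (f n)) : MonoClass 𝒜 (⋃ n, f n) := by
  have hzero : Set.accumulate f 0 = f 0 := by
    ext x; simp [Set.mem_accumulate, Nat.le_zero]
  have hsucc : ∀ n, Set.accumulate f (n + 1) = Set.accumulate f n ∪ f (n + 1) := by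
    intro n
    ext x
    simp only [Set.mem_accumulate, Set.mem_union, Nat.le_add_one_iff]
    constructor
    · rintro ⟨y, hy | rfl, hx⟩
      exacts [Or.inl ⟨y, hy, hx⟩, Or.inr hx]
    · rintro (⟨y, hy, hx⟩ | hx)
      exacts [⟨y, Or.inl hy, hx⟩, ⟨n + 1, Or.inr rfl, hx⟩]
  have hacc : ∀ n, MonoClass 𝒜 (Set.accumulate f n) := by
    intro n
    induction n with
    | zero => rw [hzero]; exact hf 0
    | succ n ih => rw [hsucc]; exact ih.union hu (hf (n + 1))
  rw [← Set.iUnion_accumulate]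
  exact .mUnion Set.monotone_accumulate hacc

/-- Monotone class theorem: every set measurable w.r.t. the σ-algebra generated by an
algebra `𝒜` belongs to the smallest monotone class containing `𝒜`. -/
theorem monoClass_of_measurable {𝒜 : Set (Set α)} (h0 : ∅ ∈ 𝒜)
    (hc : ∀ s ∈ 𝒜, sᶜ ∈ 𝒜) (hu : ∀ s ∈ 𝒜, ∀ t ∈ 𝒜, s ∪ t ∈ 𝒜) {s : Set α}
    (hs : MeasurableSet[MeasurableSpace.generateFrom 𝒜] s) : MonoClass 𝒜 s := by
  let m : MeasurableSpace α :=
    { MeasurableSet' := MonoClass 𝒜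
      measurableSet_empty := .basic h0
      measurableSet_compl := fun _ ht => ht.compl hc
      measurableSet_iUnion := fun _ hf => MonoClass.iUnion h0 hu hf }
  exact MeasurableSpace.generateFrom_le (m := m) (fun t ht => MonoClass.basic ht) s hs

end MonoClassAux

theorem stmt2 {Ω : Type*} [mΩ : MeasurableSpace Ω]
    (μ : Set Ω → ℝ) (hcap : IsCapacity μ) (hb : ContBelow μ) (ha : ContAbove μ)
    (Y : ℕ → Ω → ℝ) (hY : ∀ n, Measurable (Y n))
    (hIndep : ∀ n : ℕ,
      IndepSigmaWrt μ
        (⨆ k, ⨆ _ : k ≤ n, MeasurableSpace.comap (Y k) inferInstance)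
        (⨆ k, ⨆ _ : n + 1 ≤ k, MeasurableSpace.comap (Y k) inferInstance)) :
    ∀ A : Set Ω,
      MeasurableSet[⨅ n : ℕ, ⨆ k, ⨆ _ : n ≤ k, MeasurableSpace.comap (Y k) inferInstance] A →
        (μ A = 0 ∨ μ A = 1) ∧ (μ A = 0 ∨ μ Aᶜ = 0) := by
  intro A hA
  set ℱ : ℕ → MeasurableSpace Ω :=
    fun n => ⨆ k, ⨆ _ : k ≤ n, MeasurableSpace.comap (Y k) inferInstance with hℱ
  set 𝒢 : ℕ → MeasurableSpace Ω :=
    fun n => ⨆ k, ⨆ _ : n ≤ k, MeasurableSpace.comap (Y k) inferInstance with h𝒢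
  have hcomap_le : ∀ k, MeasurableSpace.comap (Y k) inferInstance ≤ mΩ :=
    fun k => (hY k).comap_le
  have hℱ_le : ∀ n, ℱ n ≤ mΩ := fun n => iSup₂_le fun k _ => hcomap_le k
  have h𝒢_le : ∀ n, 𝒢 n ≤ mΩ := fun n => iSup₂_le fun k _ => hcomap_le k
  -- the algebra of "finite past" measurable sets
  set 𝒜 : Set (Set Ω) := {s | ∃ n, MeasurableSet[ℱ n] s} with h𝒜
  have hℱ_mono : ∀ {n m : ℕ}, n ≤ m → ℱ n ≤ ℱ m := fun {n m} h =>
    iSup₂_le fun k hk => le_iSup₂ (f := fun k (_ : k ≤ m) =>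
      MeasurableSpace.comap (Y k) inferInstance) k (hk.trans h)
  have h0 : ∅ ∈ 𝒜 := ⟨0, @MeasurableSet.empty _ (ℱ 0)⟩
  have hc : ∀ s ∈ 𝒜, sᶜ ∈ 𝒜 := fun s ⟨n, hs⟩ => ⟨n, hs.compl⟩
  have hu : ∀ s ∈ 𝒜, ∀ t ∈ 𝒜, s ∪ t ∈ 𝒜 := by
    rintro s ⟨n, hs⟩ t ⟨m, ht⟩
    exact ⟨max n m, (hℱ_mono (le_max_left n m) s hs).union (hℱ_mono (le_max_right n m) t ht)⟩
  -- tail sets are in every 𝒢 m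
  have htail : ∀ m : ℕ, (⨅ n : ℕ, 𝒢 n) ≤ 𝒢 m := fun m => iInf_le _ m
  -- key independence lemma
  have key : ∀ T : Set Ω, MeasurableSet T → (∀ n : ℕ, MeasurableSet[𝒢 (n + 1)] T) →
      ∀ B : Set Ω, MonoClass 𝒜 B → MeasurableSet B ∧ μ (B ∩ T) = μ B * μ T := by
    intro T hTm hT B hB
    induction hB with
    | @basic s hs =>
        obtain ⟨n, hs⟩ := hs
        exact ⟨hℱ_le n s hs, hIndep n s T hs (hT n)⟩
    | @mUnion f hf ihf ih =>
        have hmeas : ∀ n, MeasurableSet (f n) := fun n => (ih n).1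
        refine ⟨MeasurableSet.iUnion hmeas, ?_⟩
        have h1 : Tendsto (fun n => μ (f n ∩ T)) atTop (nhds (μ ((⋃ n, f n) ∩ T))) := by
          have := hb (fun n => f n ∩ T) (fun n => (hmeas n).inter hTm)
            (fun a b hab => Set.inter_subset_inter (hf hab) subset_rfl)
          rwa [← Set.iUnion_inter] at this
        have h2 : Tendsto (fun n => μ (f n) * μ T) atTop (nhds (μ (⋃ n, f n) * μ T)) :=
          (hb f hmeas hf).mul_const (μ T)
        have heq : (fun n => μ (f n ∩ T)) = fun n => μ (f n) * μ T :=
          funext fun n => (ih n).2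
        rw [heq] at h1
        exact tendsto_nhds_unique h1 h2
    | @mInter f hf ihf ih =>
        have hmeas : ∀ n, MeasurableSet (f n) := fun n => (ih n).1
        refine ⟨MeasurableSet.iInter hmeas, ?_⟩
        have h1 : Tendsto (fun n => μ (f n ∩ T)) atTop (nhds (μ ((⋂ n, f n) ∩ T))) := by
          have := ha (fun n => f n ∩ T) (fun n => (hmeas n).inter hTm)
            (fun a b hab => Set.inter_subset_inter (hf hab) subset_rfl)
          rwa [← Set.iInter_inter] at this
        have h2 : Tendsto (fun n => μ (f n) * μ T) atTop (nhds (μ (⋂ n, f n) * μ T)) :=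
          (ha f hmeas hf).mul_const (μ T)
        have heq : (fun n => μ (f n ∩ T)) = fun n => μ (f n) * μ T :=
          funext fun n => (ih n).2
        rw [heq] at h1
        exact tendsto_nhds_unique h1 h2
  -- A belongs to the monotone class generated by 𝒜
  have hAMC : MonoClass 𝒜 A := by
    have hA0 : MeasurableSet[𝒢 0] A := htail 0 A hA
    have h𝒢0 : 𝒢 0 ≤ MeasurableSpace.generateFrom 𝒜 := by
      refine iSup₂_le fun k _ => ?_
      intro s hs
      exact MeasurableSpace.measurableSet_generateFrom
        ⟨k, le_iSup₂ (f := fun j (_ : j ≤ k) =>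
          MeasurableSpace.comap (Y j) inferInstance) k le_rfl s hs⟩
    exact monoClass_of_measurable h0 hc hu (h𝒢0 A hA0)
  have hAm : MeasurableSet A := h𝒢_le 0 A (htail 0 A hA)
  have hAT : ∀ n : ℕ, MeasurableSet[𝒢 (n + 1)] A := fun n => htail (n + 1) A hA
  have hAcT : ∀ n : ℕ, MeasurableSet[𝒢 (n + 1)] Aᶜ := fun n => (hAT n).compl
  -- μ A = μ A * μ A
  have h1 : μ A = μ A * μ A := by
    have := (key A hAm hAT A hAMC).2
    rwa [Set.inter_self] at this
  -- 0 = μ A * μ Aᶜ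
  have h2 : (0 : ℝ) = μ A * μ Aᶜ := by
    have := (key Aᶜ hAm.compl hAcT A hAMC).2
    rwa [Set.inter_compl_self, hcap.1] at this
  constructor
  · have : μ A * (μ A - 1) = 0 := by ring_nf; linarith [h1]
    rcases mul_eq_zero.1 this with h | h
    · exact Or.inl h
    · exact Or.inr (by linarith)
  · rcases mul_eq_zero.1 h2.symm with h | h
    · exact Or.inl h
    · exact Or.inr h
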